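/- Let P_m be a dyadic digital (t_m, m, s)-net in base 2 with dual net P_m^⊥. Then for every A = (a_1,…,a_s) ∈ I_m^s and every Y ∈ [0,1)^s, the micro-local discrepancy has the Walsh-series representation λ_A(P_m ⊕ Y^{(m)}) = 2^{m − a_0(A)} ∑_{𝔪 ∈ P_m^{⊥,*}, ρ(𝔪_i) ≤ a_i ∀i} e(∑_{i=1}^s (∑_{j=1}^m 𝔪_{i,j} y_{i,j} + 𝔪_{i,a_i})), with the convention 𝔪_{i,0} := 0. -/

import Mathlib

open MeasureTheory Filter

noncomputable section

attribute [local instance] Classical.propDecidable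

/-- The `a`-th binary digit (`a ≥ 1`) of the dyadic expansion of `x ∈ [0,1)`
(the finite expansion is used for dyadic rationals). -/
def bdigit (a : ℕ) (x : ℝ) : ℕ := (⌊x * 2 ^ a⌋).toNat % 2

/-- Digitwise addition modulo 2 of dyadic expansions: `x ⊕ y`. -/
def xorReal (x y : ℝ) : ℝ :=
  ∑' a : ℕ, (((bdigit (a + 1) x + bdigit (a + 1) y) % 2 : ℕ) : ℝ) / 2 ^ (a + 1)

/-- Coordinatewise digitwise addition `⊕` on vectors. -/
def xorVec {s : ℕ} (X Y : Fin s → ℝ) : Fin s → ℝ := fun i => xorReal (X i) (Y i)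

/-- Local discrepancy `D(P, Y)` of a finite point set `P` in `[0,1)^s`. -/
def Dloc {N s : ℕ} (P : Fin N → Fin s → ℝ) (Y : Fin s → ℝ) : ℝ :=
  (∑ n : Fin N, if ∀ i, 0 ≤ P n i ∧ P n i < Y i then (1 : ℝ) else 0) -
    (N : ℝ) * ∏ i, Y i

/-- `P` is a `(t,m,s)`-net in base 2: every elementary dyadic box of volume
`2^(t-m)` contains exactly `2^t` of the points. -/
def IsNet (t m s : ℕ) (P : Fin (2 ^ m) → Fin s → ℝ) : Prop :=
  ∀ d a : Fin s → ℕ, (∀ i, a i < 2 ^ d i) → (∑ i, d i) + t = m →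
    (Finset.univ.filter fun n => ∀ i,
        (a i : ℝ) / 2 ^ d i ≤ P n i ∧ P n i < ((a i : ℝ) + 1) / 2 ^ d i).card = 2 ^ t

/-- The digits `x_{n,i,j}` of the `n`-th point of the dyadic digital net with
generating matrices `C`. -/
def netDig (m s : ℕ) (C : Fin s → Matrix (Fin m) (Fin m) (ZMod 2)) (n : ℕ) :
    Fin s → Fin m → ZMod 2 :=
  fun i j => ∑ r : Fin m, C i j r * (if n.testBit r then 1 else 0)

/-- The `n`-th point of the dyadic digital net with generating matrices `C`. -/
def netPoint (m s : ℕ) (C : Fin s → Matrix (Fin m) (Fin m) (ZMod 2)) (n : ℕ) :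
    Fin s → ℝ :=
  fun i => ∑ j : Fin m, ((netDig m s C n i j).val : ℝ) / 2 ^ ((j : ℕ) + 1)

/-- The unit cube `[0,1]^s`. -/
def cube (s : ℕ) : Set (Fin s → ℝ) := Set.univ.pi fun _ => Set.Icc (0 : ℝ) 1

/-- The point of `Q^s(2^m)` with coordinates `T i / 2^m`. -/
def Qpt {s : ℕ} (m : ℕ) (T : Fin s → Fin (2 ^ m)) : Fin s → ℝ :=
  fun i => ((T i : ℕ) : ℝ) / 2 ^ m

/-- `M_{s,p}(P) = (2^{-sm} ∑_{T ∈ Q^s(2^m)} ∫_{[0,1]^s} |D(P ⊕ T, Y)|^p dY)^{1/p}`. -/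
def Msp (s m : ℕ) (p : ℝ) {N : ℕ} (P : Fin N → Fin s → ℝ) : ℝ :=
  ((2 : ℝ) ^ (-(s * m : ℤ)) * ∑ T : Fin s → Fin (2 ^ m),
      ∫ Y in cube s, |Dloc (fun n => xorVec (P n) (Qpt m T)) Y| ^ p) ^ (1 / p)

/-- The standard normal distribution function `Φ`. -/
def PhiCDF (w : ℝ) : ℝ :=
  (Real.sqrt (2 * Real.pi))⁻¹ * ∫ u in Set.Iio w, Real.exp (-u ^ 2 / 2)

/-- `χ_p`, the `p`-th absolute moment of the standard Gaussian. -/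
def chiMoment (p : ℝ) : ℝ :=
  (Real.sqrt (2 * Real.pi))⁻¹ * ∫ u : ℝ, |u| ^ p * Real.exp (-u ^ 2 / 2)

/-- Digits `y_{n,i,j}` of the points of the dyadic digital sequence generated by
the `ℕ × ℕ` matrices `C` over `F_2`. -/
def seqDig (s : ℕ) (C : Fin s → ℕ → ℕ → ZMod 2) (n : ℕ) : Fin s → ℕ → ZMod 2 :=
  fun i j => ∑ r ∈ Finset.range (n + 1), C i j r * (if n.testBit r then 1 else 0)

/-- The `n`-th point of the dyadic digital sequence generated by `C`. -/
def seqPoint (s : ℕ) (C : Fin s → ℕ → ℕ → ZMod 2) (n : ℕ) : Fin s → ℝ :=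
  fun i => ∑' j : ℕ, ((seqDig s C n i j).val : ℝ) / 2 ^ (j + 1)

/-- The digital sequence generated by `C` is a dyadic digital `(T,s)`-sequence:
for all `m ≥ 1` and `k ≥ 0` the block `X_{k2^m}, …, X_{k2^m+2^m-1}` is a
`(T(m),m,s)`-net in base 2. -/
def IsTSeq (s : ℕ) (Tf : ℕ → ℕ) (C : Fin s → ℕ → ℕ → ZMod 2) : Prop :=
  (∀ m, Tf m ≤ m) ∧
  ∀ m, 1 ≤ m → ∀ k : ℕ,
    IsNet (Tf m) m s fun n : Fin (2 ^ m) => seqPoint s C (k * 2 ^ m + (n : ℕ))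

/-- The dual net `P_m^⊥` of the digital net generated by `C`. -/
def dualNet (m s : ℕ) (C : Fin s → Matrix (Fin m) (Fin m) (ZMod 2)) :
    Finset (Fin s → Fin m → ZMod 2) :=
  Finset.univ.filter fun mm => ∀ n : Fin (2 ^ m),
    (∑ i, ∑ j, mm i j * netDig m s C (n : ℕ) i j) = 0

/-- `ρ(b)`: the position of the last nonzero digit (`ρ(0) = 0`). -/
def rhoF {m : ℕ} (b : Fin m → ZMod 2) : ℕ :=
  (Finset.univ.filter fun j => b j ≠ 0).sup fun j => (j : ℕ) + 1

/-- The 1-indexed component `𝔪_{i,a}` (as `0` or `1`), with the convention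
`𝔪_{i,0} = 0`. -/
def mAt {m : ℕ} (b : Fin m → ZMod 2) (a : ℕ) : ℕ :=
  if h : 1 ≤ a ∧ a ≤ m then (b ⟨a - 1, by omega⟩).val else 0

/-- The 1-indexed digit of a digit array, with the convention that digit `0`
and digits beyond `m` are `0`. -/
def dAt {m : ℕ} (y : Fin m → Fin 2) (a : ℕ) : ℕ :=
  if h : 1 ≤ a ∧ a ≤ m then (y ⟨a - 1, by omega⟩).val else 0

/-- `κ(A)`: the number of nonzero entries of `A`. -/
def kapF {s : ℕ} (A : Fin s → ℕ) : ℕ := (Finset.univ.filter fun i => A i ≠ 0).card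

/-- `a₀(A) = a₁ + ⋯ + a_s`. -/
def a0F {s : ℕ} (A : Fin s → ℕ) : ℕ := ∑ i, A i

/-- `Λ_A(T ⊕ Y^{(m)})` as a function of the digit arrays `t`, `y` of `T`, `Y`:
`∑_{𝔪 ∈ P^{⊥,*}, ρ(𝔪_i) ≤ a_i} e(∑_i (∑_j 𝔪_{i,j}(t_{i,j}+y_{i,j}) + 𝔪_{i,a_i}))`,
where `e(n) = exp(πin) = (-1)^n`. -/
def LamF (m s : ℕ) (C : Fin s → Matrix (Fin m) (Fin m) (ZMod 2)) (A : Fin s → ℕ)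
    (t y : Fin s → Fin m → Fin 2) : ℝ :=
  ∑ mm ∈ (dualNet m s C).filter fun mm => mm ≠ 0 ∧ ∀ i, rhoF (mm i) ≤ A i,
    (-1 : ℝ) ^
      (∑ i, ((∑ j, (mm i j).val * ((t i j : ℕ) + (y i j : ℕ))) + mAt (mm i) (A i)))

/-- The Rademacher function `r_A(Y)` as a function of the digit array of `Y`. -/
def rademF {m s : ℕ} (A : Fin s → ℕ) (y : Fin s → Fin m → Fin 2) : ℝ :=
  ∏ i, (-1 : ℝ) ^ dAt (y i) (A i)

/-- `Ψ_A = (-1)^{κ(A)} 2^{m-s-a₀(A)} r_A(Y) Λ_A(T ⊕ Y^{(m)})` at digit level. -/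
def PsiF (m s : ℕ) (C : Fin s → Matrix (Fin m) (Fin m) (ZMod 2)) (A : Fin s → ℕ)
    (t y : Fin s → Fin m → Fin 2) : ℝ :=
  (-1 : ℝ) ^ kapF A * (2 : ℝ) ^ ((m : ℤ) - (s : ℤ) - (a0F A : ℤ)) *
    rademF A y * LamF m s C A t y

/-- `V₀ = 10 log₂ m`. -/
def V0 (m : ℕ) : ℝ := 10 * Real.logb 2 m

/-- `I_{m,s,k} = {A ∈ I_m^s : max_i a_i = k, a₀(A) ∈ (m - t_m, m + V₀)}`. -/
def IndexSet (m s tm k : ℕ) : Finset (Fin s → ℕ) :=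
  (Fintype.piFinset fun _ : Fin s => Finset.range (m + 1)).filter fun A =>
    Finset.univ.sup A = k ∧ ((m : ℝ) - tm < a0F A ∧ (a0F A : ℝ) < m + V0 m)

/-- `I_{m,s,m+1} = {A ∈ I_m^s : a₀(A) ≥ m + V₀}`. -/
def IndexTail (m s : ℕ) : Finset (Fin s → ℕ) :=
  (Fintype.piFinset fun _ : Fin s => Finset.range (m + 1)).filter fun A =>
    (m : ℝ) + V0 m ≤ (a0F A : ℝ)

/-- `𝔇_k(T,Y) = ∑_{A ∈ I_{m,s,k}} Ψ_A` at digit level. -/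
def DDk (m s tm : ℕ) (C : Fin s → Matrix (Fin m) (Fin m) (ZMod 2)) (k : ℕ)
    (t y : Fin s → Fin m → Fin 2) : ℝ :=
  ∑ A ∈ IndexSet m s tm k, PsiF m s C A t y

/-- `R(T,Y) = ∑_{A ∈ I_{m,s,m+1}} Ψ_A` at digit level. -/
def Rtail (m s : ℕ) (C : Fin s → Matrix (Fin m) (Fin m) (ZMod 2))
    (t y : Fin s → Fin m → Fin 2) : ℝ :=
  ∑ A ∈ IndexTail m s, PsiF m s C A t y

/-- `E^{(m)}_{Y,T}(f)`: the average of `f` over all digit arrays. -/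
def Em (m s : ℕ) (f : (Fin s → Fin m → Fin 2) → (Fin s → Fin m → Fin 2) → ℝ) : ℝ :=
  (2 : ℝ) ^ (-(2 * s * m : ℤ)) *
    ∑ t : Fin s → Fin m → Fin 2, ∑ y : Fin s → Fin m → Fin 2, f t y

/-- Keep the first `k` digits of `t`, replace the remaining ones by those of `t'`. -/
def mergeDig {m s : ℕ} (k : ℕ) (t t' : Fin s → Fin m → Fin 2) :
    Fin s → Fin m → Fin 2 :=
  fun i j => if (j : ℕ) < k then t i j else t' i j

/-- The conditional expectation `E^{(m)}_{Y,T}(f | F_k)` with respect to the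
σ-field `F_k` generated by the dyadic cubes of side `2^{-k}`: the average of `f`
over the digits of index `> k`, as a function of the digit arrays `t`, `y`. -/
def EmCond (m s k : ℕ)
    (f : (Fin s → Fin m → Fin 2) → (Fin s → Fin m → Fin 2) → ℝ)
    (t y : Fin s → Fin m → Fin 2) : ℝ :=
  (2 : ℝ) ^ (-(2 * s * m : ℤ)) *
    ∑ t' : Fin s → Fin m → Fin 2, ∑ y' : Fin s → Fin m → Fin 2,
      f (mergeDig k t t') (mergeDig k y y')

/-- `Θ_{A₁,A₂,k} = E^{(m)}_{Y,T}(Ψ_{A₁}Ψ_{A₂} | F_{k-1}) - E^{(m)}_{Y,T}(Ψ_{A₁}Ψ_{A₂})`. -/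
def ThetaF (m s : ℕ) (C : Fin s → Matrix (Fin m) (Fin m) (ZMod 2))
    (A1 A2 : Fin s → ℕ) (k : ℕ) (t y : Fin s → Fin m → Fin 2) : ℝ :=
  EmCond m s (k - 1) (fun t' y' => PsiF m s C A1 t' y' * PsiF m s C A2 t' y') t y -
    Em m s fun t' y' => PsiF m s C A1 t' y' * PsiF m s C A2 t' y'

/-- `Υ_{d₁,d₂,d₃,J,k}` for a partition `J = (J₁,J₂,J₃)` of `{1,…,s}` and
`k = (k₁,k₂)`. -/
def Ups (m s tm : ℕ) (C : Fin s → Matrix (Fin m) (Fin m) (ZMod 2))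
    (J1 J2 J3 : Finset (Fin s)) (k1 k2 : ℕ) : ℝ :=
  ∑ A1 ∈ IndexSet m s tm k1, ∑ A2 ∈ IndexSet m s tm k1,
    ∑ A3 ∈ IndexSet m s tm k2, ∑ A4 ∈ IndexSet m s tm k2,
      (Em m s fun t y => ThetaF m s C A1 A2 k1 t y * ThetaF m s C A3 A4 k2 t y) *
        (if (Finset.univ.filter fun i => A1 i = A2 i) = J1 ∧
            (Finset.univ.filter fun i => A1 i < A2 i) = J2 ∧
            (Finset.univ.filter fun i => A2 i < A1 i) = J3 ∧
            (Finset.univ.filter fun i => A3 i = A4 i) = J1 ∧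
            (Finset.univ.filter fun i => A3 i < A4 i) = J2 ∧
            (Finset.univ.filter fun i => A4 i < A3 i) = J3 then (1 : ℝ) else 0)

/-- The array of the first `m` dyadic digits of the coordinates of `Y`. -/
def digitsOf (m s : ℕ) (Y : Fin s → ℝ) : Fin s → Fin m → Fin 2 :=
  fun i j => ⟨bdigit ((j : ℕ) + 1) (Y i), by unfold bdigit; omega⟩

/-- Truncation `y^{(m)}` to the first `m` dyadic digits. -/
def truncR (m : ℕ) (y : ℝ) : ℝ :=
  ∑ j ∈ Finset.range m, (bdigit (j + 1) y : ℝ) / 2 ^ (j + 1)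

/-- The elementary interval `Π_a` (`Π_0 = [0,1)`, `Π_a = [2^{-a}, 2^{1-a})`). -/
def PiBox (a : ℕ) : Set ℝ :=
  if a = 0 then Set.Ico 0 1 else Set.Ico ((2 : ℝ) ^ (-(a : ℤ))) ((2 : ℝ) ^ (1 - (a : ℤ)))

/-- `λ_A(Y) = 1_{Π_A}(Y) - vol(Π_A)`. -/
def lamA {s : ℕ} (A : Fin s → ℕ) (Y : Fin s → ℝ) : ℝ :=
  (if ∀ i, Y i ∈ PiBox (A i) then (1 : ℝ) else 0) - (2 : ℝ) ^ (-(a0F A : ℤ))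

/-- The micro-local discrepancy `λ_A(P_m^{(m)} ⊕ T ⊕ Y^{(m)})`. -/
def lamNet (m s : ℕ) (C : Fin s → Matrix (Fin m) (Fin m) (ZMod 2))
    (T Y : Fin s → ℝ) (A : Fin s → ℕ) : ℝ :=
  ∑ n : Fin (2 ^ m),
    lamA A fun i =>
      xorReal (xorReal (truncR m (netPoint m s C (n : ℕ) i)) (T i)) (truncR m (Y i))

/-- The Rademacher function `r_A(Y)` for a real point `Y`. -/
def rademReal {s : ℕ} (A : Fin s → ℕ) (Y : Fin s → ℝ) : ℝ :=
  ∏ i, if A i = 0 then (1 : ℝ) else 1 - 2 * (bdigit (A i) (Y i) : ℝ)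

/-- The truncated discrepancy
`D^{(m)}(P_m ⊕ T, Y) = 2^{-s} ∑_{A ∈ I_m^s} (-1)^{κ(A)} λ_A(P_m^{(m)} ⊕ T ⊕ Y^{(m)}) r_A(Y)`. -/
def Dm (m s : ℕ) (C : Fin s → Matrix (Fin m) (Fin m) (ZMod 2)) (T Y : Fin s → ℝ) : ℝ :=
  (2 : ℝ) ^ (-(s : ℤ)) *
    ∑ A ∈ Fintype.piFinset fun _ : Fin s => Finset.range (m + 1),
      (-1 : ℝ) ^ kapF A * lamNet m s C T Y A * rademReal A Y

/-- `𝔼_{Y,T,m}(f) = 2^{-sm} ∑_{T ∈ Q^s(2^m)} ∫_{[0,1]^s} f(T,Y) dY`. -/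
def EE (m s : ℕ) (f : (Fin s → ℝ) → (Fin s → ℝ) → ℝ) : ℝ :=
  (2 : ℝ) ^ (-(s * m : ℤ)) * ∑ T : Fin s → Fin (2 ^ m), ∫ Y in cube s, f (Qpt m T) Y
def chi (x : ZMod 2) : ℝ := if x = 0 then 1 else -1

lemma zmod2_cases : ∀ x : ZMod 2, x = 0 ∨ x = 1 := by decide

lemma chi_zero : chi 0 = 1 := by simp [chi]

lemma chi_add (x y : ZMod 2) : chi (x + y) = chi x * chi y := by
  rcases zmod2_cases x with h | h <;> rcases zmod2_cases y with h' | h' <;>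
    subst h <;> subst h' <;> simp [chi, show (1+1:ZMod 2)=0 from rfl, show (1:ZMod 2) ≠ 0 from by decide]

lemma chi_natCast (n : ℕ) : chi (n : ZMod 2) = (-1 : ℝ) ^ n := by
  induction n with
  | zero => simp [chi]
  | succ k ih => rw [Nat.cast_add, Nat.cast_one, chi_add, ih, pow_succ]; norm_num [chi]

lemma chi_sum {ι : Type*} (s : Finset ι) (f : ι → ZMod 2) :
    chi (∑ j ∈ s, f j) = ∏ j ∈ s, chi (f j) := by
  classical
  induction s using Finset.cons_induction with
  | empty => simp [chi]
  | cons a s ha ih => rw [Finset.sum_cons, Finset.prod_cons, chi_add, ih]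

lemma sum_half_pow (M : ℕ) : ∑ k ∈ Finset.range M, ((1:ℝ)/2) ^ (k+1) = 1 - (1/2) ^ M := by
  induction M with
  | zero => simp
  | succ k ih => rw [Finset.sum_range_succ, ih]; ring

lemma floor_lem (m a : ℕ) (g : ℕ → ℕ) (hg : ∀ j, g j ≤ 1) :
    ⌊(∑ j ∈ Finset.range m, (g j : ℝ)/2^(j+1)) * 2^a⌋ =
      ∑ j ∈ Finset.range (min a m), g j * 2^(a-1-j) := by
  set N : ℕ := ∑ j ∈ Finset.range (min a m), g j * 2^(a-1-j) with hN
  have key : (∑ j ∈ Finset.range m, (g j : ℝ)/2^(j+1)) * 2^a =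
      (N : ℝ) + ∑ j ∈ Finset.Ico (min a m) m, (g j : ℝ) * (2^a / 2^(j+1)) := by
    rw [Finset.sum_mul]
    rw [Finset.range_eq_Ico, ← Finset.sum_Ico_consecutive _ (Nat.zero_le (min a m)) (min_le_right a m)]
    congr 1
    · push_cast [hN]
      rw [← Finset.range_eq_Ico]
      apply Finset.sum_congr rfl
      intro j hj
      simp only [Finset.mem_range] at hj
      have hja : j + 1 ≤ a := by omega
      have h2 : (2:ℝ)^a / 2^(j+1) = 2^(a-1-j) := by
        rw [show a-1-j = a - (j+1) from by omega, pow_sub₀ (2:ℝ) (by norm_num) hja,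
          div_eq_mul_inv]
      rw [div_mul_eq_mul_div, mul_div_assoc, h2]
    · apply Finset.sum_congr rfl; intros; ring
  rw [key]
  have h0 : 0 ≤ ∑ j ∈ Finset.Ico (min a m) m, (g j : ℝ) * (2^a / 2^(j+1)) := by
    apply Finset.sum_nonneg; intro j _; positivity
  have h1 : ∑ j ∈ Finset.Ico (min a m) m, (g j : ℝ) * (2^a / 2^(j+1)) < 1 := by
    rcases le_or_gt m a with hma | ham
    · have : min a m = m := min_eq_right hma
      rw [this]; simp
    · have hmin : min a m = a := min_eq_left ham.le
      rw [hmin]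
      calc ∑ j ∈ Finset.Ico a m, (g j : ℝ) * (2^a / 2^(j+1))
          ≤ ∑ j ∈ Finset.Ico a m, 2^a / 2^(j+1) := by
            apply Finset.sum_le_sum; intro j _
            have h1 : (g j : ℝ) ≤ 1 := by exact_mod_cast hg j
            have hpos : (0:ℝ) ≤ 2^a/2^(j+1) := by positivity
            exact mul_le_of_le_one_left hpos h1
        _ = ∑ k ∈ Finset.range (m - a), ((1:ℝ)/2)^(k+1) := by
            rw [Finset.sum_Ico_eq_sum_range]
            apply Finset.sum_congr rfl
            intro k _
            rw [div_pow, one_pow, pow_add, pow_add]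
            field_simp
            ring
        _ = 1 - (1/2)^(m-a) := sum_half_pow _
        _ < 1 := by
            have : (0:ℝ) < (1/2)^(m-a) := by positivity
            linarith
  have : ((N:ℤ):ℝ) ≤ (N:ℝ) + ∑ j ∈ Finset.Ico (min a m) m, (g j : ℝ) * (2^a / 2^(j+1)) ∧
      (N:ℝ) + ∑ j ∈ Finset.Ico (min a m) m, (g j : ℝ) * (2^a / 2^(j+1)) < (N:ℤ) + 1 := by
    constructor
    · push_cast; linarith
    · push_cast; linarith
  exact Int.floor_eq_iff.mpr this

lemma bdigit_sum (m a : ℕ) (g : ℕ → ℕ) (hg : ∀ j, g j ≤ 1) :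
    bdigit (a+1) (∑ j ∈ Finset.range m, (g j : ℝ)/2^(j+1)) = if a < m then g a else 0 := by
  unfold bdigit
  rw [floor_lem m (a+1) g hg]
  rw [Int.toNat_natCast]
  rcases lt_or_ge a m with h | h
  · have hmin : min (a+1) m = a + 1 := by omega
    rw [hmin, Finset.sum_range_succ]
    have : a + 1 - 1 - a = 0 := by omega
    rw [this, pow_zero, mul_one]
    have hdvd : 2 ∣ ∑ j ∈ Finset.range a, g j * 2^(a+1-1-j) := by
      apply Finset.dvd_sum
      intro j hj
      simp only [Finset.mem_range] at hj
      have : a + 1 - 1 - j = (a - 1 - j) + 1 := by omega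
      rw [this, pow_succ]
      exact ⟨g j * 2^(a-1-j), by ring⟩
    simp only [if_pos h]
    have := hg a
    omega
  · have hmin : min (a+1) m = m := by omega
    rw [hmin]
    have hdvd : 2 ∣ ∑ j ∈ Finset.range m, g j * 2^(a+1-1-j) := by
      apply Finset.dvd_sum
      intro j hj
      simp only [Finset.mem_range] at hj
      have : a + 1 - 1 - j = (a - 1 - j) + 1 := by omega
      rw [this, pow_succ]
      exact ⟨g j * 2^(a-1-j), by ring⟩
    simp only [if_neg (by omega : ¬ a < m)]
    omega

lemma digit_sum_nonneg (m : ℕ) (g : ℕ → ℕ) :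
    (0:ℝ) ≤ ∑ j ∈ Finset.range m, (g j : ℝ)/2^(j+1) := by
  apply Finset.sum_nonneg; intro j _; positivity

lemma digit_sum_lt_one (m : ℕ) (g : ℕ → ℕ) (hg : ∀ j, g j ≤ 1) :
    (∑ j ∈ Finset.range m, (g j : ℝ)/2^(j+1)) < 1 := by
  have h := floor_lem m 0 g hg
  simp only [Nat.min_zero, Finset.range_zero, Finset.sum_empty, pow_zero, mul_one,
    Nat.cast_zero] at h
  have := Int.lt_floor_add_one (∑ j ∈ Finset.range m, (g j : ℝ)/2^(j+1))
  rw [h] at this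
  simpa using this

lemma SS_eq_one_iff (a : ℕ) (ha1 : 1 ≤ a) (g : ℕ → ℕ) (hg : ∀ j, g j ≤ 1) :
    (∑ j ∈ Finset.range a, g j * 2^(a-1-j)) = 1 ↔
      (g (a-1) = 1 ∧ ∀ j < a - 1, g j = 0) := by
  have hsplit : ∑ j ∈ Finset.range a, g j * 2^(a-1-j)
      = (∑ j ∈ Finset.range (a-1), g j * 2^(a-1-j)) + g (a-1) := by
    rw [show a = (a-1) + 1 from by omega, Finset.sum_range_succ]
    simp
  constructor
  · intro h
    have hdvd : 2 ∣ ∑ j ∈ Finset.range (a-1), g j * 2^(a-1-j) := by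
      apply Finset.dvd_sum
      intro j hj
      simp only [Finset.mem_range] at hj
      rw [show a-1-j = (a-2-j)+1 from by omega, pow_succ]
      exact ⟨g j * 2^(a-2-j), by ring⟩
    have hga : g (a-1) = 1 := by have := hg (a-1); omega
    have hzero : ∑ j ∈ Finset.range (a-1), g j * 2^(a-1-j) = 0 := by omega
    refine ⟨hga, fun j hj => ?_⟩
    have hterm := (Finset.sum_eq_zero_iff).mp hzero j (Finset.mem_range.mpr hj)
    have h2 : 0 < 2^(a-1-j) := Nat.pow_pos (by norm_num)
    exact (Nat.mul_eq_zero.mp hterm).resolve_right h2.ne'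
  · rintro ⟨hga, hz⟩
    rw [hsplit, hga, Finset.sum_eq_zero]
    intro j hj
    simp only [Finset.mem_range] at hj
    rw [hz j hj, zero_mul]

lemma mem_PiBox_iff (m a : ℕ) (ha1 : 1 ≤ a) (ham : a ≤ m) (g : ℕ → ℕ) (hg : ∀ j, g j ≤ 1) :
    ((∑ j ∈ Finset.range m, (g j : ℝ)/2^(j+1)) ∈ PiBox a) ↔
      (g (a-1) = 1 ∧ ∀ j < a - 1, g j = 0) := by
  set z := ∑ j ∈ Finset.range m, (g j : ℝ)/2^(j+1) with hz
  have hfloor : ⌊z * 2^a⌋ = ∑ j ∈ Finset.range a, g j * 2^(a-1-j) := by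
    rw [floor_lem m a g hg, min_eq_left ham]
  have hpos : (0:ℝ) < 2^a := by positivity
  have hl : (2:ℝ)^(-(a:ℤ)) * 2^a = 1 := by
    rw [← zpow_natCast (2:ℝ) a, ← zpow_add₀ (by norm_num : (2:ℝ) ≠ 0)]
    simp
  have hu : (2:ℝ)^(1-(a:ℤ)) * 2^a = 2 := by
    rw [← zpow_natCast (2:ℝ) a, ← zpow_add₀ (by norm_num : (2:ℝ) ≠ 0)]
    norm_num
  have hbox : z ∈ PiBox a ↔ (1 ≤ z * 2^a ∧ z * 2^a < 2) := by
    unfold PiBox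
    rw [if_neg (by omega : ¬ a = 0)]
    simp only [Set.mem_Ico]
    constructor
    · rintro ⟨h1, h2⟩
      constructor
      · nlinarith
      · nlinarith
    · rintro ⟨h1, h2⟩
      constructor
      · nlinarith
      · nlinarith
  rw [hbox, ← SS_eq_one_iff a ha1 g hg]
  constructor
  · rintro ⟨h1, h2⟩
    have hfl : ⌊z * 2^a⌋ = 1 := Int.floor_eq_iff.mpr (by constructor <;> push_cast <;> linarith)
    have := hfloor.symm.trans hfl
    exact_mod_cast this
  · intro h
    have hfl : ⌊z * 2^a⌋ = 1 := by rw [hfloor, h]; norm_num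
    have h2 := Int.floor_le (z * 2^a)
    have h3 := Int.lt_floor_add_one (z * 2^a)
    rw [hfl] at h2 h3
    push_cast at h2 h3
    exact ⟨h2, by linarith⟩

lemma univ_zmod2 : (Finset.univ : Finset (ZMod 2)) = {0, 1} := by decide

lemma sum_zmod2 (f : ZMod 2 → ℝ) : ∑ v : ZMod 2, f v = f 0 + f 1 := by
  rw [univ_zmod2, Finset.sum_pair (by decide : (0:ZMod 2) ≠ 1)]

lemma val_cast_zmod2 : ∀ x : ZMod 2, ((x.val : ℕ) : ZMod 2) = x := by decide

lemma rhoF_le_iff {m : ℕ} (b : Fin m → ZMod 2) (a : ℕ) :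
    rhoF b ≤ a ↔ ∀ j : Fin m, a ≤ (j:ℕ) → b j = 0 := by
  unfold rhoF
  rw [Finset.sup_le_iff]
  constructor
  · intro h j hj
    by_contra hb
    have := h j (Finset.mem_filter.mpr ⟨Finset.mem_univ _, hb⟩)
    omega
  · intro h j hj
    simp only [Finset.mem_filter] at hj
    by_contra hc
    exact hj.2 (h j (by omega))

lemma card_filter_lt (m a : ℕ) (ham : a ≤ m) :
    (Finset.univ.filter fun j : Fin m => (j:ℕ) < a).card = a := by
  have : (Finset.univ.filter fun j : Fin m => (j:ℕ) < a) =
      Finset.map ⟨Fin.castLE ham, Fin.castLE_injective ham⟩ Finset.univ := by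
    ext j
    simp only [Finset.mem_filter, Finset.mem_univ, true_and, Finset.mem_map,
      Function.Embedding.coeFn_mk]
    constructor
    · intro h
      exact ⟨⟨(j:ℕ), h⟩, by ext; simp [Fin.castLE]⟩
    · rintro ⟨i, rfl⟩
      exact i.isLt
  rw [this, Finset.card_map, Finset.card_univ, Fintype.card_fin]

lemma prod_ite_all {ι : Type*} [Fintype ι] (P : ι → Prop) [DecidablePred P] (x : ι → ℝ) :
    (∏ i, if P i then x i else 0) = if (∀ i, P i) then ∏ i, x i else 0 := by
  by_cases h : ∀ i, P i
  · rw [if_pos h]; exact Finset.prod_congr rfl fun i _ => if_pos (h i)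
  · rw [if_neg h]
    push_neg at h
    obtain ⟨i, hi⟩ := h
    exact Finset.prod_eq_zero (Finset.mem_univ i) (if_neg hi)

lemma coord (m a : ℕ) (ham : a ≤ m) (g : ℕ → ℕ) (hg : ∀ j, g j ≤ 1) :
    (∑ b : Fin m → ZMod 2, if rhoF b ≤ a then
        chi ((∑ j : Fin m, b j * ((g (j:ℕ) : ZMod 2))) + ((mAt b a : ℕ) : ZMod 2)) else 0)
    = if (∑ j ∈ Finset.range m, (g j : ℝ)/2^(j+1)) ∈ PiBox a then (2:ℝ)^a else 0 := by
  classical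
  rcases Nat.eq_zero_or_pos a with rfl | ha1
  · -- a = 0
    have hmem : (∑ j ∈ Finset.range m, (g j : ℝ)/2^(j+1)) ∈ PiBox 0 := by
      unfold PiBox
      rw [if_pos rfl]
      exact ⟨digit_sum_nonneg m g, digit_sum_lt_one m g hg⟩
    rw [if_pos hmem, pow_zero]
    have hiff : ∀ b : Fin m → ZMod 2, (rhoF b ≤ 0) ↔ b = 0 := by
      intro b
      rw [rhoF_le_iff]
      constructor
      · intro h; funext j; exact h j (Nat.zero_le _)
      · intro h j _; rw [h]; rfl
    calc (∑ b : Fin m → ZMod 2, if rhoF b ≤ 0 then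
            chi ((∑ j : Fin m, b j * ((g (j:ℕ) : ZMod 2))) + ((mAt b 0 : ℕ) : ZMod 2)) else 0)
        = ∑ b : Fin m → ZMod 2, if b = 0 then
            chi ((∑ j : Fin m, b j * ((g (j:ℕ) : ZMod 2))) + ((mAt b 0 : ℕ) : ZMod 2)) else 0 := by
          apply Finset.sum_congr rfl
          intro b _
          rw [if_congr (hiff b) rfl rfl]
      _ = chi ((∑ j : Fin m, (0:ZMod 2) * ((g (j:ℕ) : ZMod 2))) + ((mAt (0 : Fin m → ZMod 2) 0 : ℕ) : ZMod 2)) := by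
          rw [Finset.sum_ite_eq' Finset.univ (0 : Fin m → ZMod 2)]
          simp
      _ = 1 := by
          have : mAt (0 : Fin m → ZMod 2) 0 = 0 := by unfold mAt; rw [dif_neg (by omega)]
          simp [this, chi]
  · -- 1 ≤ a
    have ham1 : a - 1 < m := by omega
    set c : Fin m := ⟨a-1, ham1⟩ with hc
    set φ : Fin m → ZMod 2 → ℝ := fun j v =>
      if a ≤ (j:ℕ) then (if v = 0 then 1 else 0)
      else chi (v * (g (j:ℕ) : ZMod 2) + (if (j:ℕ) = a - 1 then v else 0)) with hφ
    have stepA : ∀ b : Fin m → ZMod 2,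
        (if rhoF b ≤ a then
          chi ((∑ j : Fin m, b j * ((g (j:ℕ) : ZMod 2))) + ((mAt b a : ℕ) : ZMod 2)) else 0)
        = ∏ j : Fin m, φ j (b j) := by
      intro b
      by_cases hb : rhoF b ≤ a
      · rw [if_pos hb]
        have hb' := (rhoF_le_iff b a).mp hb
        have hrw : ∀ j : Fin m, φ j (b j)
            = chi (b j * (g (j:ℕ) : ZMod 2) + (if (j:ℕ) = a - 1 then b j else 0)) := by
          intro j
          by_cases hja : a ≤ (j:ℕ)
          · simp only [hφ, if_pos hja]
            rw [hb' j hja, if_pos rfl]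
            have : ((0:ZMod 2) * (g (j:ℕ) : ZMod 2) + (if (j:ℕ) = a - 1 then (0:ZMod 2) else 0)) = 0 := by
              rw [zero_mul, zero_add, ite_self]
            rw [this, chi_zero]
          · simp only [hφ, if_neg hja]
        rw [Finset.prod_congr rfl (fun j _ => hrw j), ← chi_sum]
        congr 1
        rw [Finset.sum_add_distrib]
        congr 1
        · have : ∀ j : Fin m, (if (j:ℕ) = a - 1 then b j else 0) = (if j = c then b j else 0) := by
            intro j
            refine if_congr ?_ rfl rfl
            rw [Fin.ext_iff]
          rw [Finset.sum_congr rfl (fun j _ => this j),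
            Finset.sum_ite_eq' Finset.univ c (fun j => b j), if_pos (Finset.mem_univ c)]
          have : mAt b a = (b c).val := by unfold mAt; rw [dif_pos ⟨ha1, ham⟩]
          rw [this, val_cast_zmod2]
      · rw [if_neg hb]
        rw [rhoF_le_iff] at hb
        push_neg at hb
        obtain ⟨j0, hj0, hbj0⟩ := hb
        symm
        apply Finset.prod_eq_zero (Finset.mem_univ j0)
        simp only [hφ, if_pos hj0]
        rw [if_neg hbj0]
    rw [Finset.sum_congr rfl (fun b _ => stepA b)]
    rw [← Fintype.piFinset_univ, ← Finset.prod_univ_sum]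
    -- now evaluate each factor
    have hF : ∀ j : Fin m, (∑ v : ZMod 2, φ j v) =
        if a ≤ (j:ℕ) then 1
        else if (j:ℕ) = a-1 then (if g (a-1) = 1 then 2 else 0)
        else (if g (j:ℕ) = 0 then 2 else 0) := by
      intro j
      rw [sum_zmod2]
      by_cases hja : a ≤ (j:ℕ)
      · simp only [hφ, if_pos hja]
        norm_num
      · simp only [hφ, if_neg hja]
        by_cases hjc : (j:ℕ) = a - 1
        · simp only [hjc, if_pos rfl]
          have h1 := hg (a-1)
          rcases Nat.le_one_iff_eq_zero_or_eq_one.mp h1 with h | h <;> rw [h] <;>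
            norm_num [chi, show (1+1:ZMod 2) = 0 from by decide,
              show (1:ZMod 2) ≠ 0 from by decide]
        · simp only [if_neg hjc]
          have h1 := hg (j:ℕ)
          rcases Nat.le_one_iff_eq_zero_or_eq_one.mp h1 with h | h <;> rw [h] <;>
            norm_num [chi, show (1+1:ZMod 2) = 0 from by decide,
              show (1:ZMod 2) ≠ 0 from by decide]
    rw [Finset.prod_congr rfl (fun j _ => hF j)]
    rw [mem_PiBox_iff m a ha1 ham g hg]
    by_cases hcond : g (a-1) = 1 ∧ ∀ j < a - 1, g j = 0
    · rw [if_pos hcond]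
      have hfac : ∀ j : Fin m, (if a ≤ (j:ℕ) then (1:ℝ)
          else if (j:ℕ) = a-1 then (if g (a-1) = 1 then 2 else 0)
          else (if g (j:ℕ) = 0 then 2 else 0)) = if (j:ℕ) < a then 2 else 1 := by
        intro j
        by_cases hja : a ≤ (j:ℕ)
        · rw [if_pos hja, if_neg (show ¬ (j:ℕ) < a by omega)]
        · rw [if_neg hja, if_pos (show (j:ℕ) < a by omega)]
          by_cases hjc : (j:ℕ) = a - 1
          · rw [if_pos hjc, if_pos hcond.1]
          · rw [if_neg hjc, if_pos (show g (j:ℕ) = 0 from hcond.2 (j:ℕ) (by omega))]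
      rw [Finset.prod_congr rfl (fun j _ => hfac j), Finset.prod_ite, Finset.prod_const,
        Finset.prod_const_one, mul_one, card_filter_lt m a ham]
    · rw [if_neg hcond]
      push_neg at hcond
      by_cases hga : g (a-1) = 1
      · obtain ⟨j0, hj0lt, hj0⟩ := hcond hga
        have hlt : j0 < m := by omega
        apply Finset.prod_eq_zero (Finset.mem_univ (⟨j0, hlt⟩ : Fin m))
        have hv : (((⟨j0, hlt⟩ : Fin m)) : ℕ) = j0 := rfl
        rw [hv, if_neg (show ¬ a ≤ j0 by omega), if_neg (show ¬ j0 = a - 1 by omega),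
          if_neg hj0]
      · apply Finset.prod_eq_zero (Finset.mem_univ c)
        have hv : ((c : Fin m) : ℕ) = a - 1 := rfl
        rw [hv]
        rw [if_neg (not_le.mpr (Nat.sub_lt ha1 one_pos))]
        rw [if_pos (rfl : a - 1 = a - 1)]
        rw [if_neg hga]

lemma nat_digit_lt (r : ℕ) (g : ℕ → ℕ) (hg : ∀ j, g j ≤ 1) :
    (∑ i ∈ Finset.range r, g i * 2^i) < 2^r := by
  induction r with
  | zero => simp
  | succ r ih =>
    rw [Finset.sum_range_succ, pow_succ]
    have := hg r
    nlinarith [Nat.two_pow_pos r]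

lemma nat_digit (m r : ℕ) (hr : r < m) (g : ℕ → ℕ) (hg : ∀ j, g j ≤ 1) :
    (∑ i ∈ Finset.range m, g i * 2^i) / 2^r % 2 = g r := by
  have hsplit : ∑ i ∈ Finset.range m, g i * 2^i
      = (∑ i ∈ Finset.range r, g i * 2^i) + g r * 2^r + ∑ i ∈ Finset.Ico (r+1) m, g i * 2^i := by
    rw [Finset.range_eq_Ico, ← Finset.sum_Ico_consecutive _ (Nat.zero_le (r+1)) (by omega : r+1 ≤ m),
      ← Finset.range_eq_Ico, Finset.sum_range_succ]
  have hdvd : 2^(r+1) ∣ ∑ i ∈ Finset.Ico (r+1) m, g i * 2^i := by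
    apply Finset.dvd_sum
    intro i hi
    simp only [Finset.mem_Ico] at hi
    exact Dvd.dvd.mul_left (pow_dvd_pow 2 hi.1) _
  obtain ⟨K, hK⟩ := hdvd
  have hlow := nat_digit_lt r g hg
  have h2r : 0 < 2^r := Nat.pow_pos (by norm_num)
  rw [hsplit, hK]
  have : (∑ i ∈ Finset.range r, g i * 2^i) + g r * 2^r + 2^(r+1) * K
      = (∑ i ∈ Finset.range r, g i * 2^i) + 2^r * (g r + 2 * K) := by ring
  rw [this, Nat.add_mul_div_left _ _ h2r, Nat.div_eq_of_lt hlow]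
  have := hg r
  omega

lemma orth (m s : ℕ) (C : Fin s → Matrix (Fin m) (Fin m) (ZMod 2))
    (mm : Fin s → Fin m → ZMod 2) :
    ∑ n : Fin (2^m), chi (∑ i, ∑ j, mm i j * netDig m s C (n:ℕ) i j)
    = if (∀ n : Fin (2^m), (∑ i, ∑ j, mm i j * netDig m s C (n:ℕ) i j) = 0)
      then (2^m : ℝ) else 0 := by
  classical
  set w : Fin m → ZMod 2 := fun r => ∑ i, ∑ j, mm i j * C i j r with hw
  have hlin : ∀ n : ℕ, (∑ i, ∑ j, mm i j * netDig m s C n i j)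
      = ∑ r : Fin m, w r * (if n.testBit r then 1 else 0) := by
    intro n
    unfold netDig
    calc ∑ i, ∑ j, mm i j * (∑ r : Fin m, C i j r * (if n.testBit r then 1 else 0))
        = ∑ i, ∑ j, ∑ r : Fin m, mm i j * (C i j r * (if n.testBit r then 1 else 0)) := by
          simp only [Finset.mul_sum]
      _ = ∑ i, ∑ r : Fin m, ∑ j, mm i j * (C i j r * (if n.testBit r then 1 else 0)) :=
          Finset.sum_congr rfl fun i _ => Finset.sum_comm
      _ = ∑ r : Fin m, ∑ i, ∑ j, mm i j * (C i j r * (if n.testBit r then 1 else 0)) :=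
          Finset.sum_comm
      _ = ∑ r : Fin m, w r * (if n.testBit r then 1 else 0) := by
          apply Finset.sum_congr rfl
          intro r _
          rw [hw]
          simp only [Finset.sum_mul]
          apply Finset.sum_congr rfl
          intro i _
          apply Finset.sum_congr rfl
          intro j _
          ring
  have hbit : ∀ (ε : Fin m → Fin 2) (r : Fin m),
      (if ((finFunctionFinEquiv ε : Fin (2^m)) : ℕ).testBit (r:ℕ) then (1:ZMod 2) else 0)
        = (((ε r : ℕ) : ZMod 2)) := by
    intro ε r
    have hdig : ((finFunctionFinEquiv ε : Fin (2^m)) : ℕ) / 2^(r:ℕ) % 2 = (ε r : ℕ) := by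
      rw [finFunctionFinEquiv_apply]
      set g : ℕ → ℕ := fun i => if h : i < m then (ε ⟨i,h⟩ : ℕ) else 0 with hg
      have hgle : ∀ j, g j ≤ 1 := by
        intro j
        simp only [hg]
        split
        · exact Fin.is_le _
        · norm_num
      have hsum : ∑ i : Fin m, ((ε i : ℕ)) * 2^(i:ℕ) = ∑ i ∈ Finset.range m, g i * 2^i := by
        rw [← Fin.sum_univ_eq_sum_range (fun i => g i * 2^i) m]
        apply Finset.sum_congr rfl
        intro i _
        simp only [hg, dif_pos i.isLt, Fin.eta]
      rw [hsum, nat_digit m (r:ℕ) r.isLt g hgle]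
      simp only [hg, dif_pos r.isLt, Fin.eta]
    rw [Nat.testBit_eq_decide_div_mod_eq, hdig]
    have : (ε r : ℕ) = 0 ∨ (ε r : ℕ) = 1 := by omega
    rcases this with h | h <;> rw [h] <;> simp
  have hcond : (∀ n : Fin (2^m), (∑ i, ∑ j, mm i j * netDig m s C (n:ℕ) i j) = 0)
      ↔ ∀ r : Fin m, w r = 0 := by
    constructor
    · intro h r
      have h2 : (2:ℕ)^(r:ℕ) < 2^m := Nat.pow_lt_pow_right one_lt_two r.isLt
      have hn := h ⟨2^(r:ℕ), h2⟩
      rw [hlin] at hn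
      rw [Fintype.sum_eq_single r ?_] at hn
      · rwa [Nat.testBit_two_pow_self, if_pos rfl, mul_one] at hn
      · intro r' hr'
        rw [Nat.testBit_two_pow_of_ne (by simpa [Fin.ext_iff, eq_comm] using hr'.symm),
          if_neg (by simp), mul_zero]
    · intro h n
      rw [hlin]
      apply Finset.sum_eq_zero
      intro r _
      rw [h r, zero_mul]
  rw [← Equiv.sum_comp (finFunctionFinEquiv (m := 2) (n := m))
    (fun n : Fin (2^m) => chi (∑ i, ∑ j, mm i j * netDig m s C (n:ℕ) i j))]
  have hterm : ∀ ε : Fin m → Fin 2,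
      chi (∑ i, ∑ j, mm i j * netDig m s C ((finFunctionFinEquiv ε : Fin (2^m)) : ℕ) i j)
        = ∏ r : Fin m, chi (w r * ((ε r : ℕ) : ZMod 2)) := by
    intro ε
    rw [hlin, ← chi_sum]
    congr 1
    apply Finset.sum_congr rfl
    intro r _
    rw [hbit ε r]
  rw [Finset.sum_congr rfl (fun ε _ => hterm ε)]
  rw [show (∑ ε : Fin m → Fin 2, ∏ r : Fin m, chi (w r * ((ε r : ℕ) : ZMod 2)))
      = ∏ r : Fin m, ∑ v : Fin 2, chi (w r * ((v : ℕ) : ZMod 2)) from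
    (Fintype.prod_sum (κ := fun _ : Fin m => Fin 2)
      (fun r v => chi (w r * ((v : ℕ) : ZMod 2)))).symm]
  have hfac : ∀ r : Fin m, (∑ v : Fin 2, chi (w r * ((v : ℕ) : ZMod 2)))
      = 1 + chi (w r) := by
    intro r
    rw [Fin.sum_univ_two]
    norm_num [chi_zero]
  rw [Finset.prod_congr rfl (fun r _ => hfac r)]
  by_cases hall : ∀ r : Fin m, w r = 0
  · rw [if_pos (hcond.mpr hall)]
    have : ∀ r : Fin m, (1 + chi (w r)) = 2 := by
      intro r
      rw [hall r, chi_zero]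
      norm_num
    rw [Finset.prod_congr rfl (fun r _ => this r), Finset.prod_const, Finset.card_univ,
      Fintype.card_fin]
  · rw [if_neg (fun hc => hall (hcond.mp hc))]
    push_neg at hall
    obtain ⟨r0, hr0⟩ := hall
    apply Finset.prod_eq_zero (Finset.mem_univ r0)
    rcases zmod2_cases (w r0) with h | h
    · exact absurd h hr0
    · rw [h]
      norm_num [chi]

lemma bdigit_le_one (a : ℕ) (x : ℝ) : bdigit a x ≤ 1 := by unfold bdigit; omega

lemma truncR_digit (M a : ℕ) (y : ℝ) :
    bdigit (a+1) (truncR M y) = if a < M then bdigit (a+1) y else 0 := by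
  unfold truncR
  exact bdigit_sum M a _ (fun j => bdigit_le_one _ _)

lemma xorReal_truncR (M : ℕ) (U V : ℝ) :
    xorReal (truncR M U) (truncR M V)
      = ∑ j ∈ Finset.range M, (((bdigit (j+1) U + bdigit (j+1) V) % 2 : ℕ) : ℝ)/2^(j+1) := by
  unfold xorReal
  rw [tsum_eq_sum (s := Finset.range M) ?_]
  · apply Finset.sum_congr rfl
    intro j hj
    simp only [Finset.mem_range] at hj
    rw [truncR_digit, truncR_digit, if_pos hj, if_pos hj]
  · intro a ha
    simp only [Finset.mem_range, not_lt] at ha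
    rw [truncR_digit, truncR_digit, if_neg (by omega), if_neg (by omega)]
    norm_num

lemma netPoint_digit (m s : ℕ) (C : Fin s → Matrix (Fin m) (Fin m) (ZMod 2)) (n : ℕ)
    (i : Fin s) (j : ℕ) (hj : j < m) :
    bdigit (j+1) (netPoint m s C n i) = (netDig m s C n i ⟨j, hj⟩).val := by
  set g : ℕ → ℕ := fun k => if h : k < m then (netDig m s C n i ⟨k,h⟩).val else 0 with hg
  have hgle : ∀ k, g k ≤ 1 := by
    intro k
    simp only [hg]
    split
    · have := ZMod.val_lt (netDig m s C n i ⟨k, by omega⟩)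
      omega
    · norm_num
  have hrepr : netPoint m s C n i = ∑ k ∈ Finset.range m, (g k : ℝ)/2^(k+1) := by
    unfold netPoint
    rw [← Fin.sum_univ_eq_sum_range (fun k => (g k : ℝ)/2^(k+1)) m]
    apply Finset.sum_congr rfl
    intro k _
    simp only [hg, dif_pos k.isLt, Fin.eta]
  rw [hrepr, bdigit_sum m j g hgle, if_pos hj]
  simp only [hg, dif_pos hj]

/-- Walsh-series representation of the micro-local discrepancy,
`λ_A(P_m ⊕ Y^{(m)}) = 2^{m-a₀(A)} ∑_{𝔪 ∈ P^{⊥,*}, ρ(𝔪_i) ≤ a_i}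
e(∑_i (∑_j 𝔪_{i,j} y_{i,j} + 𝔪_{i,a_i}))`. -/
theorem statement6 (s m tm : ℕ) (hs : 2 ≤ s)
    (C : Fin s → Matrix (Fin m) (Fin m) (ZMod 2))
    (hnet : IsNet tm m s fun n : Fin (2 ^ m) => netPoint m s C (n : ℕ))
    (A : Fin s → ℕ) (hA : ∀ i, A i ≤ m) (Y : Fin s → ℝ)
    (hY : ∀ i, Y i ∈ Set.Ico (0 : ℝ) 1) :
    (∑ n : Fin (2 ^ m),
        lamA A fun i => xorReal (truncR m (netPoint m s C (n : ℕ) i)) (truncR m (Y i))) =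
      (2 : ℝ) ^ ((m : ℤ) - (a0F A : ℤ)) *
        LamF m s C A (fun _ _ => (0 : Fin 2)) (digitsOf m s Y) := by

  classical
  set y : Fin s → Fin m → Fin 2 := digitsOf m s Y with hy
  set z : ℕ → Fin s → ℕ → ℕ :=
    fun n i j => (bdigit (j+1) (netPoint m s C n i) + bdigit (j+1) (Y i)) % 2 with hz
  have hzle : ∀ n i j, z n i j ≤ 1 := by intro n i j; simp only [hz]; omega
  have hZ : ∀ (n : ℕ) (i : Fin s),
      xorReal (truncR m (netPoint m s C n i)) (truncR m (Y i))
        = ∑ j ∈ Finset.range m, ((z n i j : ℕ) : ℝ)/2^(j+1) := fun n i => by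
    rw [xorReal_truncR]
  have hcast : ∀ (n : ℕ) (i : Fin s) (j : Fin m),
      ((z n i (j:ℕ) : ℕ) : ZMod 2) = netDig m s C n i j + ((y i j : ℕ) : ZMod 2) := by
    intro n i j
    simp only [hz]
    rw [ZMod.natCast_mod, Nat.cast_add, netPoint_digit m s C n i (j:ℕ) j.isLt, Fin.eta,
      val_cast_zmod2]
    rfl
  set B : (Fin s → Fin m → ZMod 2) → ZMod 2 := fun mm =>
    ∑ i, ((∑ j : Fin m, mm i j * ((y i j : ℕ) : ZMod 2)) + ((mAt (mm i) (A i) : ℕ) : ZMod 2))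
    with hB
  set G : ℕ → Fin s → (Fin m → ZMod 2) → ℝ := fun n i b =>
    if rhoF b ≤ A i then
      chi ((∑ j : Fin m, b j * ((z n i (j:ℕ) : ℕ) : ZMod 2)) + ((mAt b (A i) : ℕ) : ZMod 2))
    else 0 with hG
  -- Step 2: pointwise Walsh expansion
  have main_n : ∀ n : ℕ, lamA A (fun i => ∑ j ∈ Finset.range m, ((z n i j : ℕ) : ℝ)/2^(j+1))
      = (2:ℝ)^(-(a0F A : ℤ)) * ∑ mm ∈ Finset.univ.erase (0 : Fin s → Fin m → ZMod 2),
          ∏ i, G n i (mm i) := by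
    intro n
    have h1 : ∀ i : Fin s, (∑ b : Fin m → ZMod 2, G n i b)
        = if (∑ j ∈ Finset.range m, ((z n i j : ℕ) : ℝ)/2^(j+1)) ∈ PiBox (A i)
          then (2:ℝ)^(A i) else 0 :=
      fun i => coord m (A i) (hA i) (z n i) (fun j => hzle n i j)
    have h2 : (∑ mm : Fin s → Fin m → ZMod 2, ∏ i, G n i (mm i))
        = ∏ i, ∑ b : Fin m → ZMod 2, G n i b := (Fintype.prod_sum (G n)).symm
    have h3 : (∏ i, ∑ b : Fin m → ZMod 2, G n i b)
        = if (∀ i, (∑ j ∈ Finset.range m, ((z n i j : ℕ) : ℝ)/2^(j+1)) ∈ PiBox (A i))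
          then (2:ℝ)^(a0F A) else 0 := by
      rw [Finset.prod_congr rfl (fun i _ => h1 i), prod_ite_all, Finset.prod_pow_eq_pow_sum]
      by_cases hP : ∀ i : Fin s,
          (∑ j ∈ Finset.range m, ((z n i j : ℕ) : ℝ)/2^(j+1)) ∈ PiBox (A i) <;>
        simp [hP, a0F]
    have h0 : (∏ i, G n i ((0 : Fin s → Fin m → ZMod 2) i)) = 1 := by
      apply Finset.prod_eq_one
      intro i _
      simp only [hG, Pi.zero_apply]
      have hr0 : rhoF (0 : Fin m → ZMod 2) ≤ A i := (rhoF_le_iff _ _).mpr fun j _ => rfl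
      rw [if_pos hr0]
      have hm0 : mAt (0 : Fin m → ZMod 2) (A i) = 0 := by
        unfold mAt
        split
        · exact ZMod.val_zero
        · rfl
      have hs0 : (∑ j : Fin m, (0 : ZMod 2) * ((z n i (j:ℕ) : ℕ) : ZMod 2)) = 0 :=
        Finset.sum_eq_zero fun j _ => zero_mul _
      rw [hs0, hm0]
      simpa using chi_zero
    have hsum0 : (∑ mm : Fin s → Fin m → ZMod 2, ∏ i, G n i (mm i))
        = 1 + ∑ mm ∈ Finset.univ.erase (0 : Fin s → Fin m → ZMod 2), ∏ i, G n i (mm i) := by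
      rw [← Finset.add_sum_erase _ _ (Finset.mem_univ (0 : Fin s → Fin m → ZMod 2)), h0]
    have hpow : (2:ℝ)^(-(a0F A : ℤ)) * 2^(a0F A) = 1 := by
      rw [← zpow_natCast (2:ℝ) (a0F A), ← zpow_add₀ (by norm_num : (2:ℝ) ≠ 0)]
      simp
    unfold lamA
    have key : (if (∀ i, (∑ j ∈ Finset.range m, ((z n i j : ℕ) : ℝ)/2^(j+1)) ∈ PiBox (A i))
        then (1:ℝ) else 0)
        = (2:ℝ)^(-(a0F A : ℤ)) * (1 + ∑ mm ∈ Finset.univ.erase (0 : Fin s → Fin m → ZMod 2),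
            ∏ i, G n i (mm i)) := by
      rw [← hsum0, h2, h3]
      split_ifs with h
      · rw [hpow.symm]
      · rw [mul_zero]
    rw [key]
    ring
  -- rewrite the LHS using hZ and main_n
  have hLHS : (∑ n : Fin (2 ^ m),
      lamA A fun i => xorReal (truncR m (netPoint m s C (n : ℕ) i)) (truncR m (Y i)))
      = (2:ℝ)^(-(a0F A : ℤ)) * ∑ mm ∈ Finset.univ.erase (0 : Fin s → Fin m → ZMod 2),
          ∑ n : Fin (2 ^ m), ∏ i, G (n:ℕ) i (mm i) := by
    rw [Finset.sum_congr rfl (fun n _ => by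
      rw [show (fun i => xorReal (truncR m (netPoint m s C (n:ℕ) i)) (truncR m (Y i)))
          = fun i => ∑ j ∈ Finset.range m, ((z (n:ℕ) i j : ℕ) : ℝ)/2^(j+1) from
        funext fun i => hZ (n:ℕ) i, main_n (n:ℕ)])]
    rw [← Finset.mul_sum, Finset.sum_comm]
  rw [hLHS]
  -- Step 3: sum over n via orthogonality
  have hswap : ∀ mm : Fin s → Fin m → ZMod 2,
      (∑ n : Fin (2 ^ m), ∏ i, G (n:ℕ) i (mm i))
      = if (∀ i, rhoF (mm i) ≤ A i) then
          chi (B mm) * (if (∀ n : Fin (2^m),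
            (∑ i, ∑ j, mm i j * netDig m s C (n:ℕ) i j) = 0) then (2^m : ℝ) else 0)
        else 0 := by
    intro mm
    have hprod : ∀ n : ℕ, (∏ i, G n i (mm i))
        = if (∀ i, rhoF (mm i) ≤ A i) then
            chi (∑ i, ∑ j, mm i j * netDig m s C n i j) * chi (B mm) else 0 := by
      intro n
      simp only [hG]
      rw [prod_ite_all (fun i => rhoF (mm i) ≤ A i)]
      congr 1
      rw [← chi_sum, ← chi_add]
      congr 1
      rw [← Finset.sum_add_distrib]
      apply Finset.sum_congr rfl
      intro i _
      have : (∑ j : Fin m, mm i j * ((z n i (j:ℕ) : ℕ) : ZMod 2))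
          = (∑ j : Fin m, mm i j * netDig m s C n i j)
            + ∑ j : Fin m, mm i j * ((y i j : ℕ) : ZMod 2) := by
        rw [← Finset.sum_add_distrib]
        apply Finset.sum_congr rfl
        intro j _
        rw [hcast n i j, mul_add]
      rw [this]
      ring
    rw [Finset.sum_congr rfl (fun (n : Fin (2^m)) _ => hprod (n:ℕ))]
    by_cases hcond : ∀ i, rhoF (mm i) ≤ A i
    · rw [if_pos hcond]
      simp only [if_pos hcond]
      rw [← Finset.sum_mul, orth m s C mm]
      ring
    · rw [if_neg hcond]
      simp only [if_neg hcond]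
      exact Finset.sum_const_zero
  rw [Finset.sum_congr rfl (fun mm _ => hswap mm)]
  -- convert the sum over erase 0 with indicators to the filtered dual-net sum
  have hfilter : (∑ mm ∈ Finset.univ.erase (0 : Fin s → Fin m → ZMod 2),
      (if (∀ i, rhoF (mm i) ≤ A i) then
          chi (B mm) * (if (∀ n : Fin (2^m),
            (∑ i, ∑ j, mm i j * netDig m s C (n:ℕ) i j) = 0) then (2^m : ℝ) else 0)
        else 0))
      = ∑ mm ∈ (dualNet m s C).filter fun mm => mm ≠ 0 ∧ ∀ i, rhoF (mm i) ≤ A i,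
          (2^m : ℝ) * chi (B mm) := by
    rw [← Finset.filter_ne' Finset.univ (0 : Fin s → Fin m → ZMod 2), Finset.sum_filter]
    unfold dualNet
    rw [Finset.filter_filter, Finset.sum_filter]
    apply Finset.sum_congr rfl
    intro mm _
    by_cases h1 : mm = 0 <;> by_cases h2 : ∀ i, rhoF (mm i) ≤ A i <;>
      by_cases h3 : ∀ n : Fin (2^m), (∑ i, ∑ j, mm i j * netDig m s C (n:ℕ) i j) = 0 <;>
      simp [h1, h2, h3, mul_comm]
  rw [hfilter]
  -- identify chi (B mm) with the sign in LamF
  unfold LamF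
  rw [Finset.mul_sum, Finset.mul_sum]
  apply Finset.sum_congr rfl
  intro mm _
  have hsign : chi (B mm) = (-1 : ℝ) ^
      (∑ i, ((∑ j, (mm i j).val * (((fun _ _ => (0 : Fin 2)) i j : ℕ) + (y i j : ℕ)))
        + mAt (mm i) (A i))) := by
    rw [← chi_natCast]
    congr 1
    push_cast
    rw [hB]
    apply Finset.sum_congr rfl
    intro i _
    congr 1
    apply Finset.sum_congr rfl
    intro j _
    rw [val_cast_zmod2]
    norm_num
  rw [hsign]
  have : (2:ℝ) ^ ((m : ℤ) - (a0F A : ℤ)) = (2:ℝ)^(-(a0F A : ℤ)) * 2^m := by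
    rw [sub_eq_add_neg, add_comm, zpow_add₀ (by norm_num : (2:ℝ) ≠ 0), zpow_natCast]
  rw [this]
  ring
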